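/- Let h > 0, α ∈ ℝ, and let κ : ℤ → ℝ satisfy (κₙ₊₁ + κₙ₋₁)(1 + (h²/4)κₙ²) = α κₙ for all n ∈ ℤ. Then the quantity κₙ₊₁² + κₙ² − α κₙ₊₁ κₙ + (h²/4) κₙ₊₁² κₙ² is independent of n, i.e., there exists C ∈ ℝ with κₙ₊₁² + κₙ² − α κₙ₊₁ κₙ + (h²/4) κₙ₊₁² κₙ² = C for all n. -/

import Mathlib

/-- The discrete elastica recurrence has the conserved quantity
`κₙ₊₁² + κₙ² − ακₙ₊₁κₙ + (h²/4)κₙ₊₁²κₙ²`. -/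
theorem discrete_elastica_first_integral (h : ℝ) (hh : 0 < h) (α : ℝ) (κ : ℤ → ℝ)
    (hrec : ∀ n : ℤ,
      (κ (n + 1) + κ (n - 1)) * (1 + h ^ 2 / 4 * (κ n) ^ 2) = α * κ n) :
    ∃ C : ℝ, ∀ n : ℤ,
      (κ (n + 1)) ^ 2 + (κ n) ^ 2 - α * κ (n + 1) * κ n
        + h ^ 2 / 4 * (κ (n + 1)) ^ 2 * (κ n) ^ 2 = C := by
  set F : ℤ → ℝ := fun n =>
    (κ (n + 1)) ^ 2 + (κ n) ^ 2 - α * κ (n + 1) * κ n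
      + h ^ 2 / 4 * (κ (n + 1)) ^ 2 * (κ n) ^ 2 with hF
  have key : ∀ n : ℤ, F (n + 1) = F n := by
    intro n
    have h1 := hrec (n + 1)
    have e : n + 1 - 1 = n := by ring
    rw [e] at h1
    simp only [hF]
    linear_combination (κ (n + 1 + 1) - κ n) * h1
  have all : ∀ n : ℤ, F n = F 0 := by
    intro n
    induction n using Int.induction_on with
    | zero => rfl
    | succ k ih => rw [key k, ih]
    | pred k ih =>
        have := key (-(k : ℤ) - 1)
        have e : -(k : ℤ) - 1 + 1 = -k := by ring
        rw [e] at this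
        rw [← this]
        exact ih
  exact ⟨F 0, all⟩
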